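/- Suppose Null(Φ) ∩ 𝒦 ∩ 𝒫 = {0} (the zero matrix is the only n×L matrix that is simultaneously in the null space of Φ, k-sparse in each column, and p-row-sparse). Then for every ζ > 0 there exists a finite radius r > 0 such that every matrix X ∈ 𝒦 ∩ 𝒫 with max_{i,l} |X_{i,l}| ≥ r satisfies inf_{X_N ∈ Null(Φ)} ‖X − X_N‖_F > ζ. -/

import Mathlib

attribute [local instance] Matrix.normedAddCommGroup Matrix.normedSpace

/-- Frobenius norm of a real matrix. -/
noncomputable def frob {a b : ℕ} (A : Matrix (Fin a) (Fin b) ℝ) : ℝ :=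
  Real.sqrt (∑ i, ∑ j, (A i j) ^ 2)

/-- The set 𝒦 of n×L matrices whose every column has at most k nonzero entries. -/
def colSparse (a b k : ℕ) : Set (Matrix (Fin a) (Fin b) ℝ) :=
  {Θ | ∀ l, ({i | Θ i l ≠ 0} : Set (Fin a)).ncard ≤ k}

/-- The set 𝒫 of n×L matrices having at most p nonzero rows. -/
def rowSparse (a b p : ℕ) : Set (Matrix (Fin a) (Fin b) ℝ) :=
  {Θ | ({i | ∃ l, Θ i l ≠ 0} : Set (Fin a)).ncard ≤ p}

lemma abs_le_frob {a b : ℕ} (A : Matrix (Fin a) (Fin b) ℝ) (i : Fin a) (j : Fin b) :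
    |A i j| ≤ frob A := by
  rw [frob, ← Real.sqrt_sq_eq_abs]
  apply Real.sqrt_le_sqrt
  calc (A i j) ^ 2 ≤ ∑ j', (A i j') ^ 2 :=
        Finset.single_le_sum (f := fun j' => (A i j') ^ 2) (fun _ _ => sq_nonneg _)
          (Finset.mem_univ j)
    _ ≤ ∑ i', ∑ j', (A i' j') ^ 2 :=
        Finset.single_le_sum (f := fun i' => ∑ j', (A i' j') ^ 2)
          (fun _ _ => Finset.sum_nonneg fun _ _ => sq_nonneg _) (Finset.mem_univ i)

lemma norm_le_frob {a b : ℕ} (A : Matrix (Fin a) (Fin b) ℝ) : ‖A‖ ≤ frob A := by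
  have h0 : 0 ≤ frob A := Real.sqrt_nonneg _
  rw [Matrix.norm_le_iff h0]
  intro i
  intro j
  rw [Real.norm_eq_abs]
  exact abs_le_frob A i j

lemma entry_le_norm {a b : ℕ} (A : Matrix (Fin a) (Fin b) ℝ) (i : Fin a) (j : Fin b) :
    |A i j| ≤ ‖A‖ := by
  rw [← Real.norm_eq_abs]
  exact Matrix.norm_entry_le_entrywise_sup_norm A

lemma isOpen_entry_ne {a b : ℕ} (i : Fin a) (l : Fin b) :
    IsOpen {Y : Matrix (Fin a) (Fin b) ℝ | Y i l ≠ 0} := by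
  have hc : Continuous fun Y : Matrix (Fin a) (Fin b) ℝ => Y i l :=
    (continuous_apply l).comp (continuous_apply i)
  exact isOpen_ne.preimage hc

lemma isClosed_colSparse (a b k : ℕ) : IsClosed (colSparse a b k) := by
  rw [← isOpen_compl_iff, isOpen_iff_mem_nhds]
  intro X hX
  simp only [colSparse, Set.mem_compl_iff, Set.mem_setOf_eq, not_forall, not_le] at hX
  obtain ⟨l, hl⟩ := hX
  have hU : IsOpen (⋂ i ∈ {i | X i l ≠ 0}, {Y : Matrix (Fin a) (Fin b) ℝ | Y i l ≠ 0}) :=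
    (Set.toFinite _).isOpen_biInter fun i _ => isOpen_entry_ne i l
  refine Filter.mem_of_superset (hU.mem_nhds ?_) ?_
  · rw [Set.mem_iInter₂]
    intro i hi
    exact hi
  · intro Y hY
    rw [Set.mem_iInter₂] at hY
    simp only [Set.mem_compl_iff, colSparse, Set.mem_setOf_eq, not_forall, not_le]
    exact ⟨l, lt_of_lt_of_le hl (Set.ncard_le_ncard (fun i hi => hY i hi) (Set.toFinite _))⟩

lemma isClosed_rowSparse (a b p : ℕ) : IsClosed (rowSparse a b p) := by
  classical
  rw [← isOpen_compl_iff, isOpen_iff_mem_nhds]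
  intro X hX
  simp only [rowSparse, Set.mem_compl_iff, Set.mem_setOf_eq, not_le] at hX
  set U : Set (Matrix (Fin a) (Fin b) ℝ) :=
    ⋂ i, if h : ∃ l, X i l ≠ 0 then {Y | Y i h.choose ≠ 0} else Set.univ with hUdef
  have hU : IsOpen U := isOpen_iInter_of_finite fun i => by
    by_cases h : ∃ l, X i l ≠ 0
    · rw [dif_pos h]; exact isOpen_entry_ne i h.choose
    · rw [dif_neg h]; exact isOpen_univ
  refine Filter.mem_of_superset (hU.mem_nhds ?_) ?_
  · rw [hUdef, Set.mem_iInter]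
    intro i
    by_cases h : ∃ l, X i l ≠ 0
    · rw [dif_pos h]; exact h.choose_spec
    · rw [dif_neg h]; trivial
  · intro Y hY
    rw [hUdef, Set.mem_iInter] at hY
    simp only [Set.mem_compl_iff, rowSparse, Set.mem_setOf_eq, not_le]
    refine lt_of_lt_of_le hX (Set.ncard_le_ncard ?_ (Set.toFinite _))
    intro i hi
    have h : ∃ l, X i l ≠ 0 := hi
    have hYi := hY i
    rw [dif_pos h] at hYi
    exact ⟨h.choose, hYi⟩

theorem stmt_0 (m n L k p : ℕ) (hm : 0 < m) (hn : 0 < n) (hL : 0 < L)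
    (hk : 0 < k) (hp : 0 < p)
    (Φ : Matrix (Fin m) (Fin n) ℝ)
    (hnull : {Θ : Matrix (Fin n) (Fin L) ℝ | Φ * Θ = 0} ∩ colSparse n L k ∩ rowSparse n L p
      = {0}) :
    ∀ ζ : ℝ, 0 < ζ → ∃ r : ℝ, 0 < r ∧
      ∀ X ∈ colSparse n L k ∩ rowSparse n L p,
        (∃ i l, r ≤ |X i l|) →
          ζ < sInf ((fun XN => frob (X - XN)) ''
            {Θ : Matrix (Fin n) (Fin L) ℝ | Φ * Θ = 0}) := by
  intro ζ hζ
  classical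
  set Nset : Set (Matrix (Fin n) (Fin L) ℝ) := {Θ | Φ * Θ = 0} with hNdef
  have h0N : (0 : Matrix (Fin n) (Fin L) ℝ) ∈ Nset := by
    simp [hNdef]
  have hNne : Nset.Nonempty := ⟨0, h0N⟩
  have hNcl : IsClosed Nset := by
    have hf : Continuous fun Θ : Matrix (Fin n) (Fin L) ℝ => Φ * Θ := by
      let f : Matrix (Fin n) (Fin L) ℝ →ₗ[ℝ] Matrix (Fin m) (Fin L) ℝ :=
        { toFun := fun Θ => Φ * Θ
          map_add' := fun x y => Matrix.mul_add Φ x y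
          map_smul' := fun t x => Matrix.mul_smul Φ t x }
      exact f.continuous_of_finiteDimensional
    exact isClosed_singleton.preimage hf
  set S := colSparse n L k ∩ rowSparse n L p with hSdef
  have hScl : IsClosed S := (isClosed_colSparse n L k).inter (isClosed_rowSparse n L p)
  -- the null space is closed under scalar multiplication
  have hsmulN : ∀ (t : ℝ) (Y : Matrix (Fin n) (Fin L) ℝ), Y ∈ Nset → t • Y ∈ Nset := by
    intro t Y hY
    simp only [hNdef, Set.mem_setOf_eq] at hY ⊢
    rw [Matrix.mul_smul, hY, smul_zero]
  -- scaling lower bound for infDist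
  have hlow : ∀ (t : ℝ), 0 < t → ∀ X : Matrix (Fin n) (Fin L) ℝ,
      t * Metric.infDist X Nset ≤ Metric.infDist (t • X) Nset := by
    intro t ht X
    by_contra hcon
    push_neg at hcon
    obtain ⟨y, hy, hdy⟩ := (Metric.infDist_lt_iff hNne).mp hcon
    have hmem : t⁻¹ • y ∈ Nset := hsmulN _ _ hy
    have hdist : dist (t • X) y = t * dist X (t⁻¹ • y) := by
      rw [dist_eq_norm, dist_eq_norm, ← norm_smul_of_nonneg (le_of_lt ht)]
      congr 1
      rw [smul_sub, smul_inv_smul₀ (ne_of_gt ht)]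
    rw [hdist] at hdy
    have hle : Metric.infDist X Nset ≤ dist X (t⁻¹ • y) := Metric.infDist_le_dist_of_mem hmem
    nlinarith
  -- compactness: a uniform lower bound on the unit sphere of S
  obtain ⟨c, hc, hkey⟩ : ∃ c > 0, ∀ Y ∈ S, ‖Y‖ = 1 → c ≤ Metric.infDist Y Nset := by
    set K := S ∩ Metric.sphere 0 1 with hKdef
    have hKcomp : IsCompact K :=
      Metric.isCompact_of_isClosed_isBounded (hScl.inter Metric.isClosed_sphere)
        ((Metric.isBounded_sphere).subset Set.inter_subset_right)
    by_cases hK : K.Nonempty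
    · obtain ⟨Y0, hY0K, hmin⟩ := hKcomp.exists_isMinOn hK
        ((Metric.continuous_infDist_pt (s := Nset)).continuousOn)
      refine ⟨Metric.infDist Y0 Nset, ?_, ?_⟩
      · refine (hNcl.notMem_iff_infDist_pos hNne).mp ?_
        intro hY0N
        have hY0mem : Y0 ∈ {Θ : Matrix (Fin n) (Fin L) ℝ | Φ * Θ = 0} ∩ colSparse n L k
            ∩ rowSparse n L p := ⟨⟨hY0N, hY0K.1.1⟩, hY0K.1.2⟩
        rw [hnull] at hY0mem
        have hY0z : Y0 = 0 := hY0mem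
        have : (1 : ℝ) = 0 := by
          have h1 : dist Y0 0 = 1 := hY0K.2
          rw [hY0z, dist_self] at h1
          exact h1.symm
        norm_num at this
      · intro Y hYS hYn
        have hYK : Y ∈ K := ⟨hYS, by rw [Metric.mem_sphere, dist_zero_right]; exact hYn⟩
        exact hmin hYK
    · refine ⟨1, one_pos, fun Y hYS hYn => absurd ?_ hK⟩
      exact ⟨Y, hYS, by rw [Metric.mem_sphere, dist_zero_right]; exact hYn⟩
  refine ⟨(ζ + 1) / c, by positivity, ?_⟩
  rintro X hXS ⟨i, l, hil⟩
  have hXn : (ζ + 1) / c ≤ ‖X‖ := le_trans hil (entry_le_norm X i l)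
  have hXpos : 0 < ‖X‖ := lt_of_lt_of_le (by positivity) hXn
  have hinv : ‖X‖⁻¹ ≠ 0 := inv_ne_zero hXpos.ne'
  set Y := ‖X‖⁻¹ • X with hYdef
  have hYS : Y ∈ S := by
    constructor
    · intro l'
      have hset : {i | Y i l' ≠ 0} = {i | X i l' ≠ 0} := by
        ext i'
        simp [hYdef, Matrix.smul_apply, smul_eq_mul, mul_ne_zero_iff, hinv]
      rw [hset]
      exact hXS.1 l'
    · have hset : {i | ∃ l', Y i l' ≠ 0} = {i | ∃ l', X i l' ≠ 0} := by
        ext i'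
        simp [hYdef, Matrix.smul_apply, smul_eq_mul, mul_ne_zero_iff, hinv]
      show ({i | ∃ l', Y i l' ≠ 0} : Set (Fin n)).ncard ≤ p
      rw [hset]
      exact hXS.2
  have hYn : ‖Y‖ = 1 := by
    rw [hYdef, norm_smul, Real.norm_eq_abs, abs_inv, abs_norm, inv_mul_cancel₀ hXpos.ne']
  have h1 : c ≤ Metric.infDist Y Nset := hkey Y hYS hYn
  have h2 : ‖X‖ * Metric.infDist Y Nset ≤ Metric.infDist (‖X‖ • Y) Nset := hlow _ hXpos Y
  have hXY : ‖X‖ • Y = X := by rw [hYdef, smul_inv_smul₀ hXpos.ne']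
  rw [hXY] at h2
  have h3 : ζ < Metric.infDist X Nset := by
    have hcc : (ζ + 1) / c * c = ζ + 1 := div_mul_cancel₀ _ hc.ne'
    nlinarith [mul_le_mul_of_nonneg_left h1 (le_of_lt hXpos),
      mul_le_mul_of_nonneg_right hXn (le_of_lt hc)]
  refine lt_of_lt_of_le h3 (le_csInf ⟨frob (X - 0), 0, h0N, rfl⟩ ?_)
  rintro b ⟨XN, hXN, rfl⟩
  calc Metric.infDist X Nset ≤ dist X XN := Metric.infDist_le_dist_of_mem hXN
    _ = ‖X - XN‖ := dist_eq_norm _ _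
    _ ≤ frob (X - XN) := norm_le_frob _
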